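/- For every n ≥ 3, rank(B_n) ≥ rank(B_{n-1}) + 1, where the matrices are viewed over the rationals. -/

import Mathlib

def clawMatrix (n : ℕ) : Matrix (ZMod 2 × Fin (n + 1)) (Fin n → ZMod 2) ℚ :=
  fun p σ =>
    if h : (p.2 : ℕ) < n then (if p.1 = σ ⟨p.2, h⟩ then 1 else 0)
    else (if p.1 = ∑ i, σ i then 1 else 0)

open Finset Submodule Module

lemma zmod2_cases : ∀ g : ZMod 2, g = 0 ∨ g = 1 := by decide

lemma zmod2_if (x : ZMod 2) :
    (if (0 : ZMod 2) = x then (1 : ℚ) else 0) = 1 - (if (1 : ZMod 2) = x then 1 else 0) := by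
  rcases zmod2_cases x with rfl | rfl <;> norm_num

lemma zmod2_sum {M : Type*} [AddCommMonoid M] (f : ZMod 2 → M) :
    ∑ g, f g = f 0 + f 1 := by
  have : (Finset.univ : Finset (ZMod 2)) = {0, 1} := by decide
  rw [this, Finset.sum_insert (by decide), Finset.sum_singleton]

lemma sum_lt_two {M : Type*} [AddCommMonoid M] {n : ℕ} (hn : 2 ≤ n) (c : M) :
    ∑ i : Fin n, (if (i : ℕ) < 2 then c else 0) = c + c := by
  have h0 : (0 : ℕ) < n := by omega
  have h1 : (1 : ℕ) < n := by omega
  have h01 : ((⟨0, h0⟩ : Fin n) ≠ ⟨1, h1⟩) := by simp [Fin.ext_iff]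
  rw [← Finset.sum_subset (Finset.subset_univ ({⟨0, h0⟩, ⟨1, h1⟩} : Finset (Fin n)))]
  · rw [Finset.sum_pair h01]; simp
  · intro x _ hx
    have hx2 : ¬ ((x : ℕ) < 2) := by
      simp only [Finset.mem_insert, Finset.mem_singleton, Fin.ext_iff] at hx
      simp at hx
      omega
    simp [hx2]

/-- the chosen column indices -/
def clawSig (n : ℕ) : ZMod 2 ⊕ Fin n → Fin n → ZMod 2 :=
  Sum.elim (fun g i => if (i : ℕ) < 2 then g else 0) (fun j i => if i = j then 1 else 0)

/-- the chosen columns of `clawMatrix n` -/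
def clawV (n : ℕ) (k : ZMod 2 ⊕ Fin n) : ZMod 2 × Fin (n + 1) → ℚ :=
  fun r => clawMatrix n r (clawSig n k)

lemma clawV_row (n : ℕ) (k : ZMod 2 ⊕ Fin n) (g : ZMod 2) (j : Fin n) :
    clawV n k (g, j.castSucc) = if g = clawSig n k j then 1 else 0 := by
  have hj : ((j.castSucc : Fin (n + 1)) : ℕ) < n := by simp [j.isLt]
  have hj' : (⟨((j.castSucc : Fin (n + 1)) : ℕ), hj⟩ : Fin n) = j := by
    ext; simp
  simp only [clawV, clawMatrix]
  rw [dif_pos hj, hj']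

lemma clawV_last (n : ℕ) (k : ZMod 2 ⊕ Fin n) (g : ZMod 2) :
    clawV n k (g, Fin.last n) = if g = ∑ i, clawSig n k i then 1 else 0 := by
  simp only [clawV, clawMatrix]
  rw [dif_neg (by simp)]

lemma claw_rank_le (m : ℕ) : (clawMatrix m).rank ≤ m + 2 := by
  classical
  rw [Matrix.rank_eq_finrank_span_row]
  set w : Option (Fin (m + 1)) → ((Fin m → ZMod 2) → ℚ) :=
    fun o => Option.elim o (fun _ => 1) (fun i => clawMatrix m (1, i)) with hw
  have hle : Submodule.span ℚ (Set.range (clawMatrix m)) ≤ Submodule.span ℚ (Set.range w) := by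
    rw [Submodule.span_le]
    rintro _ ⟨⟨g, i⟩, rfl⟩
    have h1 : clawMatrix m (1, i) ∈ Submodule.span ℚ (Set.range w) :=
      Submodule.subset_span ⟨some i, rfl⟩
    have h0 : (fun _ => (1 : ℚ)) ∈ Submodule.span ℚ (Set.range w) :=
      Submodule.subset_span ⟨none, rfl⟩
    rcases zmod2_cases g with rfl | rfl
    · have hrow : clawMatrix m (0, i) = (fun _ => (1 : ℚ)) - clawMatrix m (1, i) := by
        funext σ
        simp only [clawMatrix, Pi.sub_apply]
        split
        · exact zmod2_if _
        · exact zmod2_if _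
      rw [hrow]
      exact Submodule.sub_mem _ h0 h1
    · exact h1
  have h2 : finrank ℚ (Submodule.span ℚ (Set.range w)) ≤ Fintype.card (Option (Fin (m + 1))) :=
    finrank_range_le_card w
  calc finrank ℚ (Submodule.span ℚ (Set.range (clawMatrix m)))
      ≤ finrank ℚ (Submodule.span ℚ (Set.range w)) := Submodule.finrank_mono hle
    _ ≤ Fintype.card (Option (Fin (m + 1))) := h2
    _ = m + 2 := by simp

lemma claw_indep (n : ℕ) (hn : 3 ≤ n) : LinearIndependent ℚ (clawV n) := by
  rw [Fintype.linearIndependent_iff]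
  intro a h
  have e10 : (if (1 : ZMod 2) = 0 then (1 : ℚ) else 0) = 0 := if_neg (by decide)
  have e11 : (if (1 : ZMod 2) = 1 then (1 : ℚ) else 0) = 1 := if_pos rfl
  have e00 : (if (0 : ZMod 2) = 0 then (1 : ℚ) else 0) = 1 := if_pos rfl
  have e01 : (if (0 : ZMod 2) = 1 then (1 : ℚ) else 0) = 0 := if_neg (by decide)
  have key : ∀ r, a (Sum.inl 0) * clawV n (Sum.inl 0) r + a (Sum.inl 1) * clawV n (Sum.inl 1) r
      + ∑ j, a (Sum.inr j) * clawV n (Sum.inr j) r = 0 := by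
    intro r
    have h1 := congrFun h r
    simp only [Finset.sum_apply, Pi.smul_apply, smul_eq_mul, Pi.zero_apply,
      Fintype.sum_sum_type] at h1
    rw [zmod2_sum (fun g => a (Sum.inl g) * clawV n (Sum.inl g) r)] at h1
    linarith [h1]
  -- equations at rows (1, j)
  have eq1 : ∀ j : Fin n, (if (j : ℕ) < 2 then a (Sum.inl 1) else 0) + a (Sum.inr j) = 0 := by
    intro j
    have h1 := key (1, j.castSucc)
    simp only [clawV_row, clawSig, Sum.elim_inl, Sum.elim_inr] at h1
    have hterm : ∀ j' : Fin n,
        a (Sum.inr j') * (if (1 : ZMod 2) = (if j = j' then 1 else 0) then (1 : ℚ) else 0)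
          = if j = j' then a (Sum.inr j') else 0 := by
      intro j'
      by_cases hjj : j = j' <;> simp [hjj]
    erw [Finset.sum_congr rfl (fun x _ => hterm x),
      Finset.sum_ite_eq Finset.univ j (fun j' => a (Sum.inr j')),
      if_pos (Finset.mem_univ j)] at h1
    simp only [ite_self, e10, mul_zero, zero_add] at h1
    by_cases hj2 : (j : ℕ) < 2
    · simp only [hj2, if_true, e11, mul_one] at h1 ⊢
      linarith [h1]
    · simp only [hj2, if_false, e10, mul_zero, zero_add] at h1 ⊢
      linarith [h1]
  -- equation at row (1, last)
  have hb : a (Sum.inl 1) = 0 := by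
    have h1 := key (1, Fin.last n)
    simp only [clawV_last, clawSig, Sum.elim_inl, Sum.elim_inr] at h1
    erw [sum_lt_two (show 2 ≤ n by omega) (0 : ZMod 2),
      sum_lt_two (show 2 ≤ n by omega) (1 : ZMod 2)] at h1
    rw [show (0 : ZMod 2) + 0 = 0 by decide, show (1 : ZMod 2) + 1 = 0 by decide] at h1
    have hsum : ∀ j' : Fin n, ∑ i, (if i = j' then (1 : ZMod 2) else 0) = 1 := by
      intro j'
      rw [Finset.sum_ite_eq' Finset.univ j' (fun _ => (1 : ZMod 2))]
      simp
    have haj : ∀ j : Fin n, a (Sum.inr j) = if (j : ℕ) < 2 then -a (Sum.inl 1) else 0 := by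
      intro j
      have := eq1 j
      by_cases hj2 : (j : ℕ) < 2 <;> simp [hj2] at this ⊢ <;> linarith [this]
    simp only [hsum, e10, e11, mul_zero, mul_one, zero_add, if_true, ite_true] at h1
    rw [Finset.sum_congr rfl (fun j _ => haj j),
      sum_lt_two (show 2 ≤ n by omega) (-a (Sum.inl 1))] at h1
    linarith [h1]
  have hinr : ∀ j : Fin n, a (Sum.inr j) = 0 := by
    intro j
    have := eq1 j
    rw [hb, ite_self] at this
    linarith [this]
  have h0 : a (Sum.inl 0) = 0 := by
    have h1 := key (0, (⟨0, by omega⟩ : Fin n).castSucc)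
    simp only [clawV_row, clawSig, Sum.elim_inl, Sum.elim_inr] at h1
    simp only [hinr, hb, zero_mul, mul_zero, Finset.sum_const_zero, add_zero, ite_self,
      e00, if_true, ite_true, mul_one] at h1
    linarith [h1]
  intro k
  rcases k with g | j
  · rcases zmod2_cases g with rfl | rfl
    · exact h0
    · exact hb
  · exact hinr j

lemma claw_rank_ge (n : ℕ) (hn : 3 ≤ n) : n + 2 ≤ (clawMatrix n).rank := by
  classical
  have hmem : ∀ k, clawV n k ∈ LinearMap.range (clawMatrix n).mulVecLin := by
    intro k
    refine ⟨Pi.single (clawSig n k) 1, ?_⟩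
    rw [Matrix.mulVecLin_apply, Matrix.mulVec_single]
    funext r
    simp [clawV]
  let v' : ZMod 2 ⊕ Fin n → LinearMap.range (clawMatrix n).mulVecLin :=
    fun k => ⟨clawV n k, hmem k⟩
  have hindep' : LinearIndependent ℚ v' := by
    apply LinearIndependent.of_comp (LinearMap.range (clawMatrix n).mulVecLin).subtype
    have : (LinearMap.range (clawMatrix n).mulVecLin).subtype ∘ v' = clawV n := rfl
    rw [this]
    exact claw_indep n hn
  have hcard := hindep'.fintype_card_le_finrank
  simp only [Fintype.card_sum, Fintype.card_fin] at hcard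
  have hc2 : Fintype.card (ZMod 2) = 2 := rfl
  rw [hc2] at hcard
  rw [Matrix.rank]
  omega

/-- For every `n ≥ 3`, `rank(B_n) ≥ rank(B_{n-1}) + 1` over the rationals. -/
theorem stmt_2 (n : ℕ) (hn : 3 ≤ n) :
    (clawMatrix (n - 1)).rank + 1 ≤ (clawMatrix n).rank := by
  have h1 := claw_rank_le (n - 1)
  have h2 := claw_rank_ge n hn
  omega
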